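/- Let b : ℤ → ℝ and let X, Y : ℤ → ℝ both be solutions of the discrete Hill recurrence, with Y_k ≠ 0 for all k ∈ ℤ and h := X_1·Y_0 − X_0·Y_1 ≠ 0. Set f_k := X_k/Y_k. Then for every k ∈ ℤ the cross ratio satisfies B_k := ((f_{k−1} − f_{k+1})/(f_{k−1} − f_k))·((f_{k+2} − f_k)/(f_{k+2} − f_{k+1})) = b_k·b_{k+1} (all the denominators appearing are nonzero). -/

import Mathlib

/-- For two solutions `X`, `Y` of the discrete Hill recurrence
`C_{k+1} = b_k·C_k − C_{k−1}` with `Y` nowhere vanishing and nonzero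
Wronskian `h = X_1·Y_0 − X_0·Y_1`, setting `f_k = X_k/Y_k`, the cross ratio
`B_k = [f_{k−1}, f_{k+2}, f_{k+1}, f_k]` equals `b_k·b_{k+1}`, all the
denominators appearing being nonzero. -/
theorem discrete_hill_cross_ratio (b X Y : ℤ → ℝ)
    (hX : ∀ k : ℤ, X (k + 1) = b k * X k - X (k - 1))
    (hY : ∀ k : ℤ, Y (k + 1) = b k * Y k - Y (k - 1))
    (hY0 : ∀ k : ℤ, Y k ≠ 0)
    (hh : X 1 * Y 0 - X 0 * Y 1 ≠ 0) :
    ∀ k : ℤ,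
      X (k - 1) / Y (k - 1) - X k / Y k ≠ 0 ∧
      X (k + 2) / Y (k + 2) - X (k + 1) / Y (k + 1) ≠ 0 ∧
      ((X (k - 1) / Y (k - 1) - X (k + 1) / Y (k + 1)) /
          (X (k - 1) / Y (k - 1) - X k / Y k)) *
        ((X (k + 2) / Y (k + 2) - X k / Y k) /
          (X (k + 2) / Y (k + 2) - X (k + 1) / Y (k + 1))) = b k * b (k + 1) := by
  have hW : ∀ k : ℤ, X (k + 1) * Y k - X k * Y (k + 1) = X 1 * Y 0 - X 0 * Y 1 := by
    intro k
    induction k using Int.induction_on with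
    | zero => simp
    | succ n ih =>
      have hx := hX ((n : ℤ) + 1)
      have hy := hY ((n : ℤ) + 1)
      rw [add_sub_cancel_right] at hx hy
      linear_combination ih + Y ((n : ℤ) + 1) * hx - X ((n : ℤ) + 1) * hy
    | pred n ih =>
      have hx := hX (-(n : ℤ))
      have hy := hY (-(n : ℤ))
      have e : (-(n : ℤ) - 1 + 1) = -n := by ring
      rw [e]
      linear_combination ih - Y (-(n : ℤ)) * hx + X (-(n : ℤ)) * hy
  intro k
  set h : ℝ := X 1 * Y 0 - X 0 * Y 1 with hdef
  have w1 : X k * Y (k - 1) - X (k - 1) * Y k = h := by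
    have := hW (k - 1); rw [sub_add_cancel] at this; exact this
  have w2 : X (k + 1) * Y k - X k * Y (k + 1) = h := hW k
  have w3 : X (k + 2) * Y (k + 1) - X (k + 1) * Y (k + 2) = h := by
    have := hW (k + 1)
    rw [show k + 1 + 1 = k + 2 by ring] at this
    exact this
  have hxk := hX k
  have hyk := hY k
  have hxk1 := hX (k + 1)
  have hyk1 := hY (k + 1)
  rw [add_sub_cancel_right, show k + 1 + 1 = k + 2 by ring] at hxk1 hyk1
  have y0 := hY0 (k - 1)
  have y1 := hY0 k
  have y2 := hY0 (k + 1)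
  have y3 := hY0 (k + 2)
  have e1 : X (k - 1) / Y (k - 1) - X k / Y k = -(h / (Y (k - 1) * Y k)) := by
    field_simp
    linear_combination -w1
  have e2 : X (k + 2) / Y (k + 2) - X (k + 1) / Y (k + 1) = h / (Y (k + 2) * Y (k + 1)) := by
    field_simp
    linear_combination w3
  have e3 : X (k - 1) / Y (k - 1) - X (k + 1) / Y (k + 1) = -(b k * h / (Y (k - 1) * Y (k + 1))) := by
    field_simp
    linear_combination -b k * w1 - Y (k - 1) * hxk + X (k - 1) * hyk
  have e4 : X (k + 2) / Y (k + 2) - X k / Y k = b (k + 1) * h / (Y (k + 2) * Y k) := by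
    field_simp
    linear_combination b (k + 1) * w2 + Y k * hxk1 - X k * hyk1
  refine ⟨by rw [e1]; simp [div_ne_zero, hh, y0, y1, mul_ne_zero], by
    rw [e2]; exact div_ne_zero hh (mul_ne_zero y3 y2), ?_⟩
  rw [e1, e2, e3, e4]
  field_simp
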